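/- Fix reals a,b,c > 0 and define polynomials P_w(a,b,c;z) in z by P_1 = 1 − a b z², P_2 = 1 − (a+b) z² + a b (1−c²) z⁴, and P_{w+1} = (1 − (1−c²) z²)·P_w − c² z²·P_{w−1} for w ≥ 2 (the same recurrence defines P_w(0,b,c;z), i.e. the polynomials with a replaced by 0). Then for every integer w ≥ 1, the loop generating function satisfies, as an identity of formal power series in z: P_w(a,b,c;z) · ( Σ_{n≥0} Z_{w,n,0}(a,b,c) zⁿ ) = P_w(0,b,c;z). -/

import Mathlib

open Filter
open scoped Classical

noncomputable section

/-- Step value of a Boolean step: `true` is an up step (+1), `false` a down step (−1). -/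
def stepVal (x : Bool) : ℤ := if x then 1 else -1

/-- Height of the walk after `k` steps. -/
def ht (σ : ℕ → Bool) (k : ℕ) : ℤ := ∑ i ∈ Finset.range k, stepVal (σ i)

/-- Extend a finite sequence of steps to `ℕ → Bool`. -/
def extFun {n : ℕ} (σ : Fin n → Bool) : ℕ → Bool :=
  fun i => if h : i < n then σ ⟨i, h⟩ else false

/-- The first `n` steps of `σ` stay in the strip `0 ≤ y ≤ w`. -/
def IsWalk (w n : ℕ) (σ : ℕ → Bool) : Prop :=
  ∀ k ≤ n, 0 ≤ ht σ k ∧ ht σ k ≤ (w : ℤ)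

/-- Number of contacts with the bottom wall (excluding the origin):
`m_a(φ) = #{1 ≤ k ≤ n : h_k = 0}`. -/
def ma (n : ℕ) (σ : ℕ → Bool) : ℕ :=
  ((Finset.Icc 1 n).filter (fun k => ht σ k = 0)).card

/-- Number of contacts with the top wall: `m_b(φ) = #{1 ≤ k ≤ n : h_k = w}`. -/
def mb (w n : ℕ) (σ : ℕ → Bool) : ℕ :=
  ((Finset.Icc 1 n).filter (fun k => ht σ k = (w : ℤ))).card

/-- Number of stiffness points: `m_c(φ) = #{1 ≤ k ≤ n−1 : σ_k = σ_{k+1}}`. -/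
def mc (n : ℕ) (σ : ℕ → Bool) : ℕ :=
  ((Finset.range (n - 1)).filter (fun i => σ i = σ (i + 1))).card

/-- Boltzmann weight of a walk: `W(φ) = a^{m_a} b^{m_b} c^{m_c}`. -/
def wt (w n : ℕ) (a b c : ℝ) (σ : ℕ → Bool) : ℝ :=
  a ^ ma n σ * b ^ mb w n σ * c ^ mc n σ

/-- Partition function `Z_{w,n}(a,b,c)`: sum of weights over all walks of length `n`
in the strip of width `w`. -/
def Z (w n : ℕ) (a b c : ℝ) : ℝ :=
  ∑ σ ∈ Finset.univ.filter (fun σ : Fin n → Bool => IsWalk w n (extFun σ)),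
    wt w n a b c (extFun σ)

/-- Fixed-endpoint partition function `Z_{w,n,h}(a,b,c)`: sum over walks of length `n`
in the strip of width `w` ending at height `h`. -/
def Zh (w n h : ℕ) (a b c : ℝ) : ℝ :=
  ∑ σ ∈ Finset.univ.filter
      (fun σ : Fin n → Bool => IsWalk w n (extFun σ) ∧ ht (extFun σ) n = (h : ℤ)),
    wt w n a b c (extFun σ)

end

noncomputable section

open Polynomial in
/-- The polynomials `P_w(a,b,c;z)`: `P_1 = 1 − a b z²`,
`P_2 = 1 − (a+b) z² + a b (1−c²) z⁴`, and
`P_{w+1} = (1 − (1−c²) z²)·P_w − c² z²·P_{w−1}` for `w ≥ 2`.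
(The value at `w = 0` is a dummy.) -/
def Pw (a b c : ℝ) : ℕ → Polynomial ℝ
  | 0 => 1
  | 1 => 1 - C (a * b) * X ^ 2
  | 2 => 1 - C (a + b) * X ^ 2 + C (a * b * (1 - c ^ 2)) * X ^ 4
  | (n + 3) =>
      (1 - C (1 - c ^ 2) * X ^ 2) * Pw a b c (n + 2) - C (c ^ 2) * X ^ 2 * Pw a b c (n + 1)

end

noncomputable section Aux

lemma ht_congr {σ σ' : ℕ → Bool} {k : ℕ} (h : ∀ i < k, σ i = σ' i) : ht σ k = ht σ' k :=
  Finset.sum_congr rfl fun i hi => by rw [h i (Finset.mem_range.mp hi)]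

lemma ht_succ (σ : ℕ → Bool) (k : ℕ) : ht σ (k + 1) = ht σ k + stepVal (σ k) :=
  Finset.sum_range_succ _ _

lemma ht_zero (σ : ℕ → Bool) : ht σ 0 = 0 := Finset.sum_range_zero _

lemma extFun_snoc_lt {n : ℕ} (τ : Fin n → Bool) (s : Bool) {i : ℕ} (hi : i < n) :
    extFun (Fin.snoc τ s) i = extFun τ i := by
  have h1 : i < n + 1 := Nat.lt_succ_of_lt hi
  have h2 : (⟨i, h1⟩ : Fin (n + 1)) = Fin.castSucc ⟨i, hi⟩ := rfl
  unfold extFun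
  rw [dif_pos h1, dif_pos hi, h2, Fin.snoc_castSucc]

lemma extFun_snoc_last {n : ℕ} (τ : Fin n → Bool) (s : Bool) :
    extFun (Fin.snoc τ s) n = s := by
  have h1 : n < n + 1 := Nat.lt_succ_self n
  have h2 : (⟨n, h1⟩ : Fin (n + 1)) = Fin.last n := rfl
  unfold extFun
  rw [dif_pos h1, h2, Fin.snoc_last]

lemma ht_snoc_le {n : ℕ} (τ : Fin n → Bool) (s : Bool) {k : ℕ} (hk : k ≤ n) :
    ht (extFun (Fin.snoc τ s)) k = ht (extFun τ) k :=
  ht_congr fun i hi => extFun_snoc_lt τ s (lt_of_lt_of_le hi hk)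

lemma ht_snoc_top {n : ℕ} (τ : Fin n → Bool) (s : Bool) :
    ht (extFun (Fin.snoc τ s)) (n + 1) = ht (extFun τ) n + stepVal s := by
  rw [ht_succ, ht_snoc_le τ s le_rfl, extFun_snoc_last]

lemma isWalk_succ_iff (w n : ℕ) (σ : ℕ → Bool) :
    IsWalk w (n + 1) σ ↔ IsWalk w n σ ∧ (0 ≤ ht σ (n + 1) ∧ ht σ (n + 1) ≤ (w : ℤ)) := by
  constructor
  · intro H; exact ⟨fun k hk => H k (le_trans hk (Nat.le_succ n)), H (n + 1) le_rfl⟩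
  · rintro ⟨H, h1, h2⟩ k hk
    rcases Nat.eq_or_lt_of_le hk with rfl | hlt
    · exact ⟨h1, h2⟩
    · exact H k (Nat.lt_succ_iff.mp hlt)

lemma isWalk_congr {w n : ℕ} {σ σ' : ℕ → Bool} (h : ∀ i < n, σ i = σ' i) :
    IsWalk w n σ ↔ IsWalk w n σ' := by
  have key : ∀ k ≤ n, ht σ k = ht σ' k :=
    fun k hk => ht_congr fun i hi => h i (lt_of_lt_of_le hi hk)
  unfold IsWalk
  exact forall_congr' fun k => forall_congr' fun hk => by rw [key k hk]

lemma ma_succ (n : ℕ) (σ : ℕ → Bool) :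
    ma (n + 1) σ = ma n σ + (if ht σ (n + 1) = 0 then 1 else 0) := by
  unfold ma
  rw [Finset.card_filter, Finset.card_filter, Finset.sum_Icc_succ_top (Nat.le_add_left 1 n)]

lemma mb_succ (w n : ℕ) (σ : ℕ → Bool) :
    mb w (n + 1) σ = mb w n σ + (if ht σ (n + 1) = (w : ℤ) then 1 else 0) := by
  unfold mb
  rw [Finset.card_filter, Finset.card_filter, Finset.sum_Icc_succ_top (Nat.le_add_left 1 n)]

lemma mc_succ (n : ℕ) (σ : ℕ → Bool) :
    mc (n + 2) σ = mc (n + 1) σ + (if σ n = σ (n + 1) then 1 else 0) := by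
  unfold mc
  have e1 : n + 2 - 1 = n + 1 := rfl
  have e2 : n + 1 - 1 = n := rfl
  rw [e1, e2, Finset.card_filter, Finset.card_filter, Finset.sum_range_succ]

lemma ma_congr {n : ℕ} {σ σ' : ℕ → Bool} (h : ∀ i < n, σ i = σ' i) : ma n σ = ma n σ' := by
  unfold ma
  rw [Finset.card_filter, Finset.card_filter]
  refine Finset.sum_congr rfl fun k hk => ?_
  rw [ht_congr fun i hi => h i (lt_of_lt_of_le hi (Finset.mem_Icc.mp hk).2)]

lemma mb_congr {w n : ℕ} {σ σ' : ℕ → Bool} (h : ∀ i < n, σ i = σ' i) : mb w n σ = mb w n σ' := by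
  unfold mb
  rw [Finset.card_filter, Finset.card_filter]
  refine Finset.sum_congr rfl fun k hk => ?_
  rw [ht_congr fun i hi => h i (lt_of_lt_of_le hi (Finset.mem_Icc.mp hk).2)]

lemma mc_congr {n : ℕ} {σ σ' : ℕ → Bool} (h : ∀ i < n, σ i = σ' i) : mc n σ = mc n σ' := by
  unfold mc
  rw [Finset.card_filter, Finset.card_filter]
  refine Finset.sum_congr rfl fun k hk => ?_
  have hk' := Finset.mem_range.mp hk
  rw [h k (by omega), h (k + 1) (by omega)]

lemma wt_snoc (w n : ℕ) (a b c : ℝ) (τ : Fin (n + 1) → Bool) (s : Bool) :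
    wt w (n + 2) a b c (extFun (Fin.snoc τ s)) =
      wt w (n + 1) a b c (extFun τ) *
        ((if ht (extFun τ) (n + 1) + stepVal s = 0 then a else 1) *
         ((if ht (extFun τ) (n + 1) + stepVal s = (w : ℤ) then b else 1) *
          (if extFun τ n = s then c else 1))) := by
  have hagree : ∀ i < n + 1, extFun (Fin.snoc τ s) i = extFun τ i :=
    fun i hi => extFun_snoc_lt τ s hi
  unfold wt
  rw [ma_succ, mb_succ, mc_succ, ma_congr hagree, mb_congr hagree, mc_congr hagree,
      ht_snoc_top, hagree n (Nat.lt_succ_self n), extFun_snoc_last]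
  rw [pow_add, pow_add, pow_add]
  split_ifs <;> ring

def snocEquiv (n : ℕ) : ((Fin n → Bool) × Bool) ≃ (Fin (n + 1) → Bool) where
  toFun p := Fin.snoc p.1 p.2
  invFun σ := (Fin.init σ, σ (Fin.last n))
  left_inv p := by simp [Fin.init_snoc, Fin.snoc_last]
  right_inv σ := by simp [Fin.snoc_init_self]

lemma sum_snoc (n : ℕ) (f : (Fin (n + 1) → Bool) → ℝ) :
    ∑ σ : Fin (n + 1) → Bool, f σ
      = ∑ τ : Fin n → Bool, (f (Fin.snoc τ true) + f (Fin.snoc τ false)) := by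
  rw [← Equiv.sum_comp (snocEquiv n) f, Fintype.sum_prod_type]
  refine Finset.sum_congr rfl fun τ _ => ?_
  rw [Fintype.sum_bool]
  rfl

end Aux
noncomputable section Aux2

def Zud (w h : ℕ) (s : Bool) (a b c : ℝ) : ℕ → ℝ
  | 0 => 0
  | n + 1 =>
      ∑ σ ∈ Finset.univ.filter
          (fun σ : Fin (n + 1) → Bool =>
            IsWalk w (n + 1) (extFun σ) ∧ ht (extFun σ) (n + 1) = (h : ℤ) ∧ extFun σ n = s),
        wt w (n + 1) a b c (extFun σ)

lemma cond_snoc {w m h : ℕ} (τ : Fin m → Bool) (s' : Bool) (hh2 : (h : ℤ) ≤ (w : ℤ)) :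
    (IsWalk w (m + 1) (extFun (Fin.snoc τ s')) ∧ ht (extFun (Fin.snoc τ s')) (m + 1) = (h : ℤ))
      ↔ (IsWalk w m (extFun τ) ∧ ht (extFun τ) m = (h : ℤ) - stepVal s') := by
  have hagree : ∀ i < m, extFun (Fin.snoc τ s') i = extFun τ i :=
    fun i hi => extFun_snoc_lt τ s' hi
  have h0 : (0 : ℤ) ≤ (h : ℤ) := Int.natCast_nonneg h
  have hs : stepVal s' = 1 ∨ stepVal s' = -1 := by cases s' <;> simp [stepVal]
  rw [isWalk_succ_iff, ht_snoc_top, isWalk_congr hagree]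
  constructor
  · rintro ⟨⟨h1, _, _⟩, h4⟩
    exact ⟨h1, by rcases hs with e | e <;> omega⟩
  · rintro ⟨h1, h4⟩
    refine ⟨⟨h1, ?_, ?_⟩, ?_⟩ <;> rcases hs with e | e <;> omega

lemma Zud_bot_true (w : ℕ) (a b c : ℝ) (n : ℕ) : Zud w 0 true a b c n = 0 := by
  cases n with
  | zero => rfl
  | succ n =>
    rw [Zud, Finset.filter_false_of_mem, Finset.sum_empty]
    rintro σ - ⟨hW, hht, hlast⟩
    have h1 := (hW n (Nat.le_succ n)).1
    rw [ht_succ, hlast] at hht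
    simp only [stepVal, if_true] at hht
    omega

lemma Zud_top_false (w : ℕ) (a b c : ℝ) (n : ℕ) : Zud w w false a b c n = 0 := by
  cases n with
  | zero => rfl
  | succ n =>
    rw [Zud, Finset.filter_false_of_mem, Finset.sum_empty]
    rintro σ - ⟨hW, hht, hlast⟩
    have h1 := (hW n (Nat.le_succ n)).2
    rw [ht_succ, hlast] at hht
    simp only [stepVal, if_false, Bool.false_eq_true] at hht
    omega

lemma Zud_high (w h : ℕ) (s : Bool) (a b c : ℝ) (n : ℕ) (hh : (w : ℤ) < (h : ℤ)) :
    Zud w h s a b c n = 0 := by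
  cases n with
  | zero => rfl
  | succ n =>
    rw [Zud, Finset.filter_false_of_mem, Finset.sum_empty]
    rintro σ - ⟨hW, hht, -⟩
    have h1 := (hW (n + 1) le_rfl).2
    omega

lemma wt_one (w : ℕ) (a b c : ℝ) (σ : ℕ → Bool) :
    wt w 1 a b c σ = (if ht σ 1 = 0 then a else 1) * (if ht σ 1 = (w : ℤ) then b else 1) := by
  unfold wt ma mb mc
  rw [show (1 : ℕ) - 1 = 0 from rfl]
  simp only [Finset.range_zero, Finset.filter_empty, Finset.card_empty, pow_zero, mul_one,
    Finset.Icc_self, Finset.filter_singleton]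
  split_ifs <;> simp

lemma stepVal_true : stepVal true = 1 := rfl
lemma stepVal_false : stepVal false = -1 := rfl

lemma Zud_one (w h : ℕ) (s : Bool) (a b c : ℝ) (hw : 1 ≤ w) :
    Zud w h s a b c 1 = if h = 1 ∧ s = true then (if 1 = w then b else 1) else 0 := by
  conv_lhs => rw [show (1 : ℕ) = 0 + 1 from rfl, Zud]
  rw [Finset.sum_filter, sum_snoc]
  have key : ∀ τ : Fin 0 → Bool,
      ((if IsWalk w (0 + 1) (extFun (Fin.snoc τ true)) ∧
            ht (extFun (Fin.snoc τ true)) (0 + 1) = (h : ℤ) ∧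
            extFun (Fin.snoc τ true) 0 = s then
          wt w (0 + 1) a b c (extFun (Fin.snoc τ true)) else 0)
        + (if IsWalk w (0 + 1) (extFun (Fin.snoc τ false)) ∧
            ht (extFun (Fin.snoc τ false)) (0 + 1) = (h : ℤ) ∧
            extFun (Fin.snoc τ false) 0 = s then
          wt w (0 + 1) a b c (extFun (Fin.snoc τ false)) else 0))
      = (if h = 1 ∧ s = true then (if 1 = w then b else 1) else 0) := by
    intro τ
    show ((if IsWalk w 1 (extFun (Fin.snoc τ true)) ∧
            ht (extFun (Fin.snoc τ true)) 1 = (h : ℤ) ∧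
            extFun (Fin.snoc τ true) 0 = s then
          wt w 1 a b c (extFun (Fin.snoc τ true)) else 0)
        + (if IsWalk w 1 (extFun (Fin.snoc τ false)) ∧
            ht (extFun (Fin.snoc τ false)) 1 = (h : ℤ) ∧
            extFun (Fin.snoc τ false) 0 = s then
          wt w 1 a b c (extFun (Fin.snoc τ false)) else 0))
      = (if h = 1 ∧ s = true then (if 1 = w then b else 1) else 0)
    rw [wt_one, wt_one]
    have hz1 : ht (extFun (Fin.snoc τ true)) 1 = 1 := by
      show ht (extFun (Fin.snoc τ true)) (0 + 1) = 1
      rw [ht_snoc_top, ht_zero, stepVal_true]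
      norm_num
    have hz0 : ht (extFun (Fin.snoc τ false)) 1 = -1 := by
      show ht (extFun (Fin.snoc τ false)) (0 + 1) = -1
      rw [ht_snoc_top, ht_zero, stepVal_false]
      norm_num
    have hnF : ¬(IsWalk w 1 (extFun (Fin.snoc τ false)) ∧
        ht (extFun (Fin.snoc τ false)) 1 = (h : ℤ) ∧
        extFun (Fin.snoc τ false) 0 = s) := by
      rintro ⟨hA, -, -⟩
      have h2 := (hA 1 le_rfl).1
      rw [hz0] at h2
      omega
    rw [if_neg hnF, add_zero]
    by_cases hcase : h = 1 ∧ s = true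
    · obtain ⟨rfl, rfl⟩ := hcase
      have hC : IsWalk w 1 (extFun (Fin.snoc τ true)) ∧
          ht (extFun (Fin.snoc τ true)) 1 = ((1 : ℕ) : ℤ) ∧
          extFun (Fin.snoc τ true) 0 = true := by
        refine ⟨?_, by rw [hz1]; norm_num, extFun_snoc_last _ _⟩
        show IsWalk w (0 + 1) (extFun (Fin.snoc τ true))
        rw [isWalk_succ_iff]
        refine ⟨?_, ?_, ?_⟩
        · intro k hk
          rw [Nat.le_zero.mp hk, ht_zero]
          exact ⟨le_rfl, Int.natCast_nonneg w⟩
        · show (0 : ℤ) ≤ ht (extFun (Fin.snoc τ true)) 1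
          rw [hz1]; omega
        · show ht (extFun (Fin.snoc τ true)) 1 ≤ (w : ℤ)
          rw [hz1]; exact_mod_cast hw
      rw [if_pos hC, if_pos (⟨rfl, rfl⟩ : (1 : ℕ) = 1 ∧ true = true), hz1]
      have hne : ¬((1 : ℤ) = 0) := by omega
      rw [if_neg hne]
      have e : ((1 : ℤ) = (w : ℤ)) = ((1 : ℕ) = w) := propext (by omega)
      simp only [e, one_mul]
    · have hnT : ¬(IsWalk w 1 (extFun (Fin.snoc τ true)) ∧
          ht (extFun (Fin.snoc τ true)) 1 = (h : ℤ) ∧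
          extFun (Fin.snoc τ true) 0 = s) := by
        rintro ⟨-, hht, hlast⟩
        have e1 : (1 : ℤ) = (h : ℤ) := hz1.symm.trans hht
        have e2 : true = s := (extFun_snoc_last τ true).symm.trans hlast
        exact hcase ⟨by omega, e2.symm⟩
      rw [if_neg hnT, if_neg hcase]
  rw [Finset.sum_congr rfl fun τ _ => key τ, Finset.sum_const]
  have hcard : (Finset.univ : Finset (Fin 0 → Bool)).card = 1 := by
    simp
  rw [hcard, one_smul]

lemma collect1 {α : Type*} (K cc : ℝ) (s : Finset α) (g1 g2 : α → ℝ) :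
    K * (cc * (∑ τ ∈ s, g1 τ) + ∑ τ ∈ s, g2 τ) = ∑ τ ∈ s, K * (cc * g1 τ + g2 τ) := by
  rw [Finset.mul_sum, ← Finset.sum_add_distrib, Finset.mul_sum]

lemma collect2 {α : Type*} (K cc : ℝ) (s : Finset α) (g1 g2 : α → ℝ) :
    K * ((∑ τ ∈ s, g1 τ) + cc * ∑ τ ∈ s, g2 τ) = ∑ τ ∈ s, K * (g1 τ + cc * g2 τ) := by
  rw [Finset.mul_sum, ← Finset.sum_add_distrib, Finset.mul_sum]

lemma Zud_rec_up (w h : ℕ) (a b c : ℝ) (n : ℕ) (h2 : h + 1 ≤ w) :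
    Zud w (h + 1) true a b c (n + 1 + 1)
      = (if h + 1 = w then b else 1) *
          (c * Zud w h true a b c (n + 1) + Zud w h false a b c (n + 1)) := by
  have hh2 : ((h + 1 : ℕ) : ℤ) ≤ (w : ℤ) := by exact_mod_cast h2
  simp only [Zud]
  rw [Finset.sum_filter, Finset.sum_filter, Finset.sum_filter, sum_snoc, collect1]
  refine Finset.sum_congr rfl fun τ _ => ?_
  have hnF : ¬(IsWalk w (n + 1 + 1) (extFun (Fin.snoc τ false)) ∧
      ht (extFun (Fin.snoc τ false)) (n + 1 + 1) = ((h + 1 : ℕ) : ℤ) ∧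
      extFun (Fin.snoc τ false) (n + 1) = true) := by
    rintro ⟨-, -, hl⟩
    exact absurd ((extFun_snoc_last τ false).symm.trans hl) (by simp)
  rw [if_neg hnF, add_zero]
  by_cases hC : IsWalk w (n + 1) (extFun τ) ∧ ht (extFun τ) (n + 1) = (h : ℤ)
  · have hstep : ((h + 1 : ℕ) : ℤ) - stepVal true = (h : ℤ) := by
      rw [stepVal_true]; push_cast; ring
    have hCs : IsWalk w (n + 1 + 1) (extFun (Fin.snoc τ true)) ∧
        ht (extFun (Fin.snoc τ true)) (n + 1 + 1) = ((h + 1 : ℕ) : ℤ) :=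
      (cond_snoc τ true hh2).mpr ⟨hC.1, by rw [hC.2, ← hstep]⟩
    rw [if_pos ⟨hCs.1, hCs.2, extFun_snoc_last τ true⟩, wt_snoc]
    have hhtv : ht (extFun τ) (n + 1) + stepVal true = (h : ℤ) + 1 := by
      rw [hC.2, stepVal_true]
    rw [hhtv]
    have hne0 : ¬((h : ℤ) + 1 = 0) := by omega
    rw [if_neg hne0]
    have e : ((h : ℤ) + 1 = (w : ℤ)) = (h + 1 = w) := propext (by omega)
    simp only [e]
    cases hτ : extFun τ n with
    | false =>
      have hn1 : ¬(IsWalk w (n + 1) (extFun τ) ∧ ht (extFun τ) (n + 1) = (h : ℤ) ∧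
          (false = true)) := by rintro ⟨-, -, hl⟩; cases hl
      have hvn : ¬(false = true) := by simp
      have hp1 : IsWalk w (n + 1) (extFun τ) ∧ ht (extFun τ) (n + 1) = (h : ℤ) ∧
          (false = false) := ⟨hC.1, hC.2, rfl⟩
      rw [if_neg hn1, if_pos hp1, if_neg hvn]
      ring
    | true =>
      have hn2 : ¬(IsWalk w (n + 1) (extFun τ) ∧ ht (extFun τ) (n + 1) = (h : ℤ) ∧
          (true = false)) := by rintro ⟨-, -, hl⟩; cases hl
      have hp2 : IsWalk w (n + 1) (extFun τ) ∧ ht (extFun τ) (n + 1) = (h : ℤ) ∧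
          (true = true) := ⟨hC.1, hC.2, rfl⟩
      rw [if_pos hp2, if_neg hn2, if_pos (rfl : true = true)]
      ring
  · have hnL : ¬(IsWalk w (n + 1 + 1) (extFun (Fin.snoc τ true)) ∧
        ht (extFun (Fin.snoc τ true)) (n + 1 + 1) = ((h + 1 : ℕ) : ℤ) ∧
        extFun (Fin.snoc τ true) (n + 1) = true) := by
      rintro ⟨hA, hB, -⟩
      obtain ⟨w1, w2⟩ := (cond_snoc τ true hh2).mp ⟨hA, hB⟩
      refine hC ⟨w1, ?_⟩
      rw [w2, stepVal_true]
      push_cast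
      ring
    have hn1 : ¬(IsWalk w (n + 1) (extFun τ) ∧ ht (extFun τ) (n + 1) = (h : ℤ) ∧
        extFun τ n = true) := by rintro ⟨x1, x2, -⟩; exact hC ⟨x1, x2⟩
    have hn2 : ¬(IsWalk w (n + 1) (extFun τ) ∧ ht (extFun τ) (n + 1) = (h : ℤ) ∧
        extFun τ n = false) := by rintro ⟨x1, x2, -⟩; exact hC ⟨x1, x2⟩
    rw [if_neg hnL, if_neg hn1, if_neg hn2]
    ring

lemma Zud_rec_down (w h : ℕ) (a b c : ℝ) (n : ℕ) (h2 : h + 1 ≤ w) :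
    Zud w h false a b c (n + 1 + 1)
      = (if h = 0 then a else 1) *
          (Zud w (h + 1) true a b c (n + 1) + c * Zud w (h + 1) false a b c (n + 1)) := by
  have hh2 : ((h : ℕ) : ℤ) ≤ (w : ℤ) := by
    have := Nat.le_of_succ_le h2
    exact_mod_cast this
  simp only [Zud]
  rw [Finset.sum_filter, Finset.sum_filter, Finset.sum_filter, sum_snoc, collect2]
  refine Finset.sum_congr rfl fun τ _ => ?_
  have hnT : ¬(IsWalk w (n + 1 + 1) (extFun (Fin.snoc τ true)) ∧
      ht (extFun (Fin.snoc τ true)) (n + 1 + 1) = ((h : ℕ) : ℤ) ∧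
      extFun (Fin.snoc τ true) (n + 1) = false) := by
    rintro ⟨-, -, hl⟩
    exact absurd ((extFun_snoc_last τ true).symm.trans hl) (by simp)
  rw [if_neg hnT, zero_add]
  by_cases hC : IsWalk w (n + 1) (extFun τ) ∧ ht (extFun τ) (n + 1) = ((h + 1 : ℕ) : ℤ)
  · have hstep : ((h : ℕ) : ℤ) - stepVal false = ((h + 1 : ℕ) : ℤ) := by
      rw [stepVal_false]; push_cast; ring
    have hCs : IsWalk w (n + 1 + 1) (extFun (Fin.snoc τ false)) ∧
        ht (extFun (Fin.snoc τ false)) (n + 1 + 1) = ((h : ℕ) : ℤ) :=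
      (cond_snoc τ false hh2).mpr ⟨hC.1, by rw [hC.2, ← hstep]⟩
    rw [if_pos ⟨hCs.1, hCs.2, extFun_snoc_last τ false⟩, wt_snoc]
    have hhtv : ht (extFun τ) (n + 1) + stepVal false = (h : ℤ) := by
      rw [hC.2, stepVal_false]
      push_cast
      ring
    rw [hhtv]
    have e0 : ((h : ℤ) = 0) = (h = 0) := propext (by omega)
    have ew : ¬((h : ℤ) = (w : ℤ)) := by omega
    rw [if_neg ew]
    simp only [e0]
    cases hτ : extFun τ n with
    | false =>
      have hn1 : ¬(IsWalk w (n + 1) (extFun τ) ∧ ht (extFun τ) (n + 1) = ((h + 1 : ℕ) : ℤ) ∧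
          (false = true)) := by rintro ⟨-, -, hl⟩; cases hl
      have hp1 : IsWalk w (n + 1) (extFun τ) ∧ ht (extFun τ) (n + 1) = ((h + 1 : ℕ) : ℤ) ∧
          (false = false) := ⟨hC.1, hC.2, rfl⟩
      rw [if_neg hn1, if_pos hp1, if_pos (rfl : false = false)]
      ring
    | true =>
      have hn2 : ¬(IsWalk w (n + 1) (extFun τ) ∧ ht (extFun τ) (n + 1) = ((h + 1 : ℕ) : ℤ) ∧
          (true = false)) := by rintro ⟨-, -, hl⟩; cases hl
      have hvn : ¬(true = false) := by simp
      have hp2 : IsWalk w (n + 1) (extFun τ) ∧ ht (extFun τ) (n + 1) = ((h + 1 : ℕ) : ℤ) ∧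
          (true = true) := ⟨hC.1, hC.2, rfl⟩
      rw [if_pos hp2, if_neg hn2, if_neg hvn]
      ring
  · have hnL : ¬(IsWalk w (n + 1 + 1) (extFun (Fin.snoc τ false)) ∧
        ht (extFun (Fin.snoc τ false)) (n + 1 + 1) = ((h : ℕ) : ℤ) ∧
        extFun (Fin.snoc τ false) (n + 1) = false) := by
      rintro ⟨hA, hB, -⟩
      obtain ⟨w1, w2⟩ := (cond_snoc τ false hh2).mp ⟨hA, hB⟩
      refine hC ⟨w1, ?_⟩
      rw [w2, stepVal_false]
      push_cast
      ring
    have hn1 : ¬(IsWalk w (n + 1) (extFun τ) ∧ ht (extFun τ) (n + 1) = ((h + 1 : ℕ) : ℤ) ∧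
        extFun τ n = true) := by rintro ⟨x1, x2, -⟩; exact hC ⟨x1, x2⟩
    have hn2 : ¬(IsWalk w (n + 1) (extFun τ) ∧ ht (extFun τ) (n + 1) = ((h + 1 : ℕ) : ℤ) ∧
        extFun τ n = false) := by rintro ⟨x1, x2, -⟩; exact hC ⟨x1, x2⟩
    rw [if_neg hnL, if_neg hn1, if_neg hn2]
    ring

end Aux2

noncomputable section Aux3

lemma PwA1 (a b c : ℝ) : Pw a b c 1 = 1 - Polynomial.C (a * b) * Polynomial.X ^ 2 := rfl

lemma PwA2 (a b c : ℝ) : Pw a b c 2 = 1 - Polynomial.C (a + b) * Polynomial.X ^ 2 +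
    Polynomial.C (a * b * (1 - c ^ 2)) * Polynomial.X ^ 4 := rfl

lemma PwA3 (a b c : ℝ) (n : ℕ) : Pw a b c (n + 3) =
    (1 - Polynomial.C (1 - c ^ 2) * Polynomial.X ^ 2) * Pw a b c (n + 2) -
      Polynomial.C (c ^ 2) * Polynomial.X ^ 2 * Pw a b c (n + 1) := rfl

lemma Pw0_zero (b c : ℝ) : Pw 0 b c 0 = 1 := rfl

lemma Pw0_one (b c : ℝ) : Pw 0 b c 1 = 1 := by
  rw [PwA1]; simp

lemma Pw0_two (b c : ℝ) : Pw 0 b c 2 = 1 - Polynomial.C b * Polynomial.X ^ 2 := by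
  rw [PwA2]; simp

lemma pid_poly (b c : ℝ) (d : ℕ) :
    Pw 0 b c (d + 1) - Pw 0 b c (d + 2) =
      Polynomial.C (if d = 0 then b else 1) * Polynomial.X ^ 2 *
        (Pw 0 b c (d + 1) + Polynomial.C c ^ 2 * (Pw 0 b c d - Pw 0 b c (d + 1))) := by
  cases d with
  | zero =>
    rw [if_pos rfl]
    rw [show (0 : ℕ) + 1 = 1 from rfl, show (0 : ℕ) + 2 = 2 from rfl, Pw0_zero, Pw0_one, Pw0_two]
    ring
  | succ e =>
    rw [if_neg (by omega)]
    have r : Pw 0 b c (e + 1 + 2) =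
        (1 - Polynomial.C (1 - c ^ 2) * Polynomial.X ^ 2) * Pw 0 b c (e + 1 + 1) -
          Polynomial.C (c ^ 2) * Polynomial.X ^ 2 * Pw 0 b c (e + 1) := PwA3 0 b c e
    rw [r]
    simp only [map_sub, map_one, map_pow]
    ring

def FormQ (a b c : ℝ) (w : ℕ) : Prop :=
  Pw a b c w = Pw 0 b c w -
    Polynomial.C a * Polynomial.C (if w = 1 then b else 1) * Polynomial.X ^ 2 *
      (Pw 0 b c w + Polynomial.C c ^ 2 * (Pw 0 b c (w - 1) - Pw 0 b c w))

lemma form1 (a b c : ℝ) : FormQ a b c 1 := by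
  unfold FormQ
  rw [if_pos rfl, Pw0_one, show (1 : ℕ) - 1 = 0 from rfl, Pw0_zero, PwA1]
  simp only [map_mul]
  ring

lemma form2 (a b c : ℝ) : FormQ a b c 2 := by
  unfold FormQ
  rw [if_neg (by omega), Pw0_two, show (2 : ℕ) - 1 = 1 from rfl, Pw0_one, PwA2]
  simp only [map_add, map_mul, map_sub, map_one, map_pow]
  ring

lemma form3 (a b c : ℝ) : FormQ a b c 3 := by
  unfold FormQ
  rw [if_neg (by omega), show (3 : ℕ) - 1 = 2 from rfl]
  have r1 : Pw a b c 3 =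
      (1 - Polynomial.C (1 - c ^ 2) * Polynomial.X ^ 2) * Pw a b c 2 -
        Polynomial.C (c ^ 2) * Polynomial.X ^ 2 * Pw a b c 1 := PwA3 a b c 0
  have r2 : Pw 0 b c 3 =
      (1 - Polynomial.C (1 - c ^ 2) * Polynomial.X ^ 2) * Pw 0 b c 2 -
        Polynomial.C (c ^ 2) * Polynomial.X ^ 2 * Pw 0 b c 1 := PwA3 0 b c 0
  rw [r1, r2, PwA2, PwA1, Pw0_two, Pw0_one]
  simp only [map_add, map_mul, map_sub, map_one, map_pow]
  ring

lemma form_step (a b c : ℝ) (n : ℕ) (ih2 : FormQ a b c (n + 2)) (ih3 : FormQ a b c (n + 3)) :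
    FormQ a b c (n + 4) := by
  unfold FormQ at ih2 ih3 ⊢
  rw [if_neg (show ¬(n + 2 = 1) by omega), show n + 2 - 1 = n + 1 from rfl] at ih2
  rw [if_neg (show ¬(n + 3 = 1) by omega), show n + 3 - 1 = n + 2 from rfl] at ih3
  rw [if_neg (show ¬(n + 4 = 1) by omega), show n + 4 - 1 = n + 3 from rfl]
  have r4a : Pw a b c (n + 4) =
      (1 - Polynomial.C (1 - c ^ 2) * Polynomial.X ^ 2) * Pw a b c (n + 3) -
        Polynomial.C (c ^ 2) * Polynomial.X ^ 2 * Pw a b c (n + 2) := PwA3 a b c (n + 1)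
  have r4b : Pw 0 b c (n + 4) =
      (1 - Polynomial.C (1 - c ^ 2) * Polynomial.X ^ 2) * Pw 0 b c (n + 3) -
        Polynomial.C (c ^ 2) * Polynomial.X ^ 2 * Pw 0 b c (n + 2) := PwA3 0 b c (n + 1)
  have r3b : Pw 0 b c (n + 3) =
      (1 - Polynomial.C (1 - c ^ 2) * Polynomial.X ^ 2) * Pw 0 b c (n + 2) -
        Polynomial.C (c ^ 2) * Polynomial.X ^ 2 * Pw 0 b c (n + 1) := PwA3 0 b c n
  rw [r4a, r4b, ih3, ih2, r3b]
  simp only [map_sub, map_one, map_pow]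
  ring

lemma formQ_all (a b c : ℝ) : ∀ n : ℕ, FormQ a b c (n + 1) := by
  have key : ∀ n : ℕ, FormQ a b c (n + 1) ∧ FormQ a b c (n + 2) ∧ FormQ a b c (n + 3) := by
    intro n
    induction n with
    | zero => exact ⟨form1 a b c, form2 a b c, form3 a b c⟩
    | succ m ih => exact ⟨ih.2.1, ih.2.2, form_step a b c m ih.2.1 ih.2.2⟩
  exact fun n => (key n).1

end Aux3

noncomputable section Aux4

open PowerSeries

def UD (w h : ℕ) (s : Bool) (a b c : ℝ) : PowerSeries ℝ :=
  PowerSeries.mk (Zud w h s a b c)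

lemma UD_top_false (w : ℕ) (a b c : ℝ) : UD w w false a b c = 0 := by
  ext n
  simp [UD, Zud_top_false]

lemma seriesD (w h : ℕ) (a b c : ℝ) (hhw : h + 1 ≤ w) :
    UD w h false a b c = PowerSeries.C (if h = 0 then a else 1) *
      (PowerSeries.X *
        (UD w (h + 1) true a b c + PowerSeries.C c * UD w (h + 1) false a b c)) := by
  have hw1 : 1 ≤ w := by omega
  ext n
  rw [PowerSeries.coeff_C_mul]
  cases n with
  | zero =>
    rw [PowerSeries.coeff_zero_X_mul]
    simp [UD, Zud]
  | succ m =>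
    rw [PowerSeries.coeff_succ_X_mul, map_add, PowerSeries.coeff_C_mul]
    simp only [UD, PowerSeries.coeff_mk]
    cases m with
    | zero =>
      rw [Zud_one w h false a b c hw1]
      simp [Zud]
    | succ k =>
      exact Zud_rec_down w h a b c k hhw

lemma seriesU (w h : ℕ) (a b c : ℝ) (h1 : 1 ≤ h) (hhw : h + 1 ≤ w) :
    UD w (h + 1) true a b c = PowerSeries.C (if h + 1 = w then b else 1) *
      (PowerSeries.X *
        (PowerSeries.C c * UD w h true a b c + UD w h false a b c)) := by
  have hw1 : 1 ≤ w := by omega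
  ext n
  rw [PowerSeries.coeff_C_mul]
  cases n with
  | zero =>
    rw [PowerSeries.coeff_zero_X_mul]
    simp [UD, Zud]
  | succ m =>
    rw [PowerSeries.coeff_succ_X_mul, map_add, PowerSeries.coeff_C_mul]
    simp only [UD, PowerSeries.coeff_mk]
    cases m with
    | zero =>
      rw [Zud_one w (h + 1) true a b c hw1, if_neg (by omega)]
      simp [Zud]
    | succ k =>
      exact Zud_rec_up w h a b c k hhw

lemma seriesU1 (w : ℕ) (a b c : ℝ) (hw : 1 ≤ w) :
    UD w 1 true a b c = PowerSeries.C (if w = 1 then b else 1) *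
      (PowerSeries.X * (1 + UD w 0 false a b c)) := by
  ext n
  rw [PowerSeries.coeff_C_mul]
  cases n with
  | zero =>
    rw [PowerSeries.coeff_zero_X_mul]
    simp [UD, Zud]
  | succ m =>
    rw [PowerSeries.coeff_succ_X_mul, map_add, PowerSeries.coeff_one]
    simp only [UD, PowerSeries.coeff_mk]
    cases m with
    | zero =>
      rw [Zud_one w 1 true a b c hw, if_pos ⟨rfl, rfl⟩]
      have e : ((1 : ℕ) = w) = (w = 1) := propext (by omega)
      simp [e, Zud]
    | succ k =>
      have hr : Zud w 1 true a b c (k + 1 + 1)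
          = (if 1 = w then b else 1) *
              (c * Zud w 0 true a b c (k + 1) + Zud w 0 false a b c (k + 1)) :=
        Zud_rec_up w 0 a b c k (by omega)
      rw [hr, Zud_bot_true]
      have e : ((1 : ℕ) = w) = (w = 1) := propext (by omega)
      simp [e]

lemma Zh_zero (w : ℕ) (a b c : ℝ) : Zh w 0 0 a b c = 1 := by
  unfold Zh
  rw [Finset.sum_filter]
  have key : ∀ σ : Fin 0 → Bool,
      (if IsWalk w 0 (extFun σ) ∧ ht (extFun σ) 0 = ((0 : ℕ) : ℤ) then
        wt w 0 a b c (extFun σ) else 0) = 1 := by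
    intro σ
    have hcond : IsWalk w 0 (extFun σ) ∧ ht (extFun σ) 0 = ((0 : ℕ) : ℤ) := by
      refine ⟨fun k hk => ?_, by rw [ht_zero]; simp⟩
      rw [Nat.le_zero.mp hk, ht_zero]
      exact ⟨le_rfl, Int.natCast_nonneg w⟩
    rw [if_pos hcond]
    unfold wt ma mb mc
    simp
  rw [Finset.sum_congr rfl fun σ _ => key σ, Finset.sum_const]
  have hcard : (Finset.univ : Finset (Fin 0 → Bool)).card = 1 := by simp
  rw [hcard, one_smul]

lemma Zh_split (w n : ℕ) (a b c : ℝ) :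
    Zh w (n + 1) 0 a b c = Zud w 0 true a b c (n + 1) + Zud w 0 false a b c (n + 1) := by
  unfold Zh
  simp only [Zud]
  rw [Finset.sum_filter, Finset.sum_filter, Finset.sum_filter, ← Finset.sum_add_distrib]
  refine Finset.sum_congr rfl fun σ _ => ?_
  by_cases hP : IsWalk w (n + 1) (extFun σ) ∧ ht (extFun σ) (n + 1) = ((0 : ℕ) : ℤ)
  · rw [if_pos hP]
    cases hσ : extFun σ n with
    | false =>
      have hn1 : ¬(IsWalk w (n + 1) (extFun σ) ∧ ht (extFun σ) (n + 1) = ((0 : ℕ) : ℤ) ∧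
          (false = true)) := by rintro ⟨-, -, hl⟩; cases hl
      have hp1 : IsWalk w (n + 1) (extFun σ) ∧ ht (extFun σ) (n + 1) = ((0 : ℕ) : ℤ) ∧
          (false = false) := ⟨hP.1, hP.2, rfl⟩
      rw [if_neg hn1, if_pos hp1]
      ring
    | true =>
      have hn2 : ¬(IsWalk w (n + 1) (extFun σ) ∧ ht (extFun σ) (n + 1) = ((0 : ℕ) : ℤ) ∧
          (true = false)) := by rintro ⟨-, -, hl⟩; cases hl
      have hp2 : IsWalk w (n + 1) (extFun σ) ∧ ht (extFun σ) (n + 1) = ((0 : ℕ) : ℤ) ∧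
          (true = true) := ⟨hP.1, hP.2, rfl⟩
      rw [if_pos hp2, if_neg hn2]
      ring
  · have hn1 : ¬(IsWalk w (n + 1) (extFun σ) ∧ ht (extFun σ) (n + 1) = ((0 : ℕ) : ℤ) ∧
        extFun σ n = true) := by rintro ⟨x1, x2, -⟩; exact hP ⟨x1, x2⟩
    have hn2 : ¬(IsWalk w (n + 1) (extFun σ) ∧ ht (extFun σ) (n + 1) = ((0 : ℕ) : ℤ) ∧
        extFun σ n = false) := by rintro ⟨x1, x2, -⟩; exact hP ⟨x1, x2⟩
    rw [if_neg hP, if_neg hn1, if_neg hn2]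
    ring

lemma mk_Zh (w : ℕ) (a b c : ℝ) :
    PowerSeries.mk (fun n => Zh w n 0 a b c) = 1 + UD w 0 false a b c := by
  ext n
  rw [map_add, PowerSeries.coeff_one]
  cases n with
  | zero =>
    simp [UD, Zud, Zh_zero]
  | succ m =>
    simp only [UD, PowerSeries.coeff_mk]
    rw [Zh_split, Zud_bot_true]
    simp

lemma pid_PS (b c : ℝ) (d : ℕ) :
    (Pw 0 b c (d + 1) : PowerSeries ℝ) - (Pw 0 b c (d + 2) : PowerSeries ℝ) =
      PowerSeries.C (if d = 0 then b else 1) * PowerSeries.X ^ 2 *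
        ((Pw 0 b c (d + 1) : PowerSeries ℝ) +
          PowerSeries.C c ^ 2 *
            ((Pw 0 b c d : PowerSeries ℝ) - (Pw 0 b c (d + 1) : PowerSeries ℝ))) := by
  have h := congrArg (fun p : Polynomial ℝ => (p : PowerSeries ℝ)) (pid_poly b c d)
  simpa [Polynomial.coe_sub, Polynomial.coe_mul, Polynomial.coe_add, Polynomial.coe_pow,
    Polynomial.coe_C, Polynomial.coe_X] using h

lemma formula_PS (a b c : ℝ) (w : ℕ) (hw : 1 ≤ w) :
    (Pw a b c w : PowerSeries ℝ) = (Pw 0 b c w : PowerSeries ℝ) -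
      PowerSeries.C a * PowerSeries.C (if w = 1 then b else 1) * PowerSeries.X ^ 2 *
        ((Pw 0 b c w : PowerSeries ℝ) + PowerSeries.C c ^ 2 *
          ((Pw 0 b c (w - 1) : PowerSeries ℝ) - (Pw 0 b c w : PowerSeries ℝ))) := by
  have h0 := formQ_all a b c (w - 1)
  rw [show w - 1 + 1 = w from by omega] at h0
  unfold FormQ at h0
  have h := congrArg (fun p : Polynomial ℝ => (p : PowerSeries ℝ)) h0
  simpa [Polynomial.coe_sub, Polynomial.coe_mul, Polynomial.coe_add, Polynomial.coe_pow,
    Polynomial.coe_C, Polynomial.coe_X] using h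

lemma main_ind (w : ℕ) (a b c : ℝ) (hw : 1 ≤ w) :
    ∀ d, d ≤ w - 1 →
      (Pw 0 b c (d + 1) : PowerSeries ℝ) * UD w (w - d) false a b c
        = PowerSeries.C c *
            (((Pw 0 b c d : PowerSeries ℝ) - (Pw 0 b c (d + 1) : PowerSeries ℝ)) *
              UD w (w - d) true a b c) := by
  intro d
  induction d with
  | zero =>
    intro _
    rw [Nat.sub_zero, UD_top_false]
    rw [show (0 : ℕ) + 1 = 1 from rfl, Pw0_one, Pw0_zero]
    simp
  | succ d ih =>
    intro hd
    have ih' := ih (by omega)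
    set h := w - (d + 1) with hh
    have hw1 : h + 1 = w - d := by omega
    have hhw : h + 1 ≤ w := by omega
    have h1 : 1 ≤ h := by omega
    have e3 := seriesD w h a b c hhw
    rw [if_neg (by omega), map_one, one_mul] at e3
    have e2 := seriesU w h a b c h1 hhw
    have hcond : (h + 1 = w) = (d = 0) := propext (by omega)
    simp only [hcond] at e2
    rw [← hw1] at ih'
    have pid := pid_PS b c d
    rw [show d + 1 + 1 = d + 2 from rfl]
    linear_combination (norm := ring_nf)
      (Pw 0 b c (d + 1) : PowerSeries ℝ) * e3
        + PowerSeries.X * PowerSeries.C c * ih'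
        + PowerSeries.X * ((Pw 0 b c (d + 1) : PowerSeries ℝ) +
            PowerSeries.C c ^ 2 *
              ((Pw 0 b c d : PowerSeries ℝ) - (Pw 0 b c (d + 1) : PowerSeries ℝ))) * e2
        - (PowerSeries.C c * UD w h true a b c + UD w h false a b c) * pid


end Aux4

/-- `P_w(a,b,c;z) · (Σ_n Z_{w,n,0} zⁿ) = P_w(0,b,c;z)` as formal power
series. -/
theorem loop_generating_function (a b c : ℝ) (ha : 0 < a) (hb : 0 < b) (hc : 0 < c)
    (w : ℕ) (hw : 1 ≤ w) :
    ((Pw a b c w : PowerSeries ℝ) * PowerSeries.mk (fun n => Zh w n 0 a b c)) =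
      (Pw 0 b c w : PowerSeries ℝ)     := by
  rw [mk_Zh w a b c]
  have F := main_ind w a b c hw (w - 1) le_rfl
  rw [show w - (w - 1) = 1 from by omega, show w - 1 + 1 = w from by omega] at F
  have e3 := seriesD w 0 a b c (by omega)
  rw [if_pos rfl] at e3
  have e1 := seriesU1 w a b c hw
  rw [formula_PS a b c w hw]
  linear_combination (norm := ring_nf)
    (Pw 0 b c w : PowerSeries ℝ) * e3
      + PowerSeries.C a * PowerSeries.X * PowerSeries.C c * F
      + PowerSeries.C a * PowerSeries.X * ((Pw 0 b c w : PowerSeries ℝ) +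
          PowerSeries.C c ^ 2 *
            ((Pw 0 b c (w - 1) : PowerSeries ℝ) - (Pw 0 b c w : PowerSeries ℝ))) * e1
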